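/- Let L > 0, let κ : [0,L] → ℝ be continuous, and fix t ∈ (0,1). There exists h₀ ∈ (0,L] such that for each h ∈ (0,h₀] the boundary value problem u''(s) + κ(sh)·h²·u(s) = 0 on [0,1], u(0) = 0, u(1) = 1 has a unique solution u_h which is positive on (0,1]; and moreover lim_{h→0⁺} (u_h(t) − t)/h² = (1/6)·t·(1 − t²)·κ(0). (Second-order Taylor expansion σ_κ^{(t)}(h) = t·[1 + (1/6)(1−t²)κ(0)h²] + o(h²) of the distortion coefficient in the length parameter.) -/

import Mathlib

open Set MeasureTheory intervalIntegral


noncomputable def Wop (g : ℝ → ℝ) (s : ℝ) : ℝ :=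
  s * (∫ r in (0:ℝ)..s, g r) - ∫ r in (0:ℝ)..s, r * g r

lemma Wop_est {g : ℝ → ℝ} {G s : ℝ} (hs0 : 0 ≤ s) (hs1 : s ≤ 1) (hG : 0 ≤ G)
    (hg : ∀ r ∈ Icc 0 s, |g r| ≤ G) : |Wop g s| ≤ 2 * G * s ^ 2 := by
  have hsub : uIoc (0:ℝ) s ⊆ Icc 0 s := by
    rw [uIoc_of_le hs0]; exact Ioc_subset_Icc_self
  have h1 : ‖∫ r in (0:ℝ)..s, g r‖ ≤ G * |s - 0| :=
    intervalIntegral.norm_integral_le_of_norm_le_const fun x hx => hg x (hsub hx)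
  have h2 : ‖∫ r in (0:ℝ)..s, r * g r‖ ≤ G * s * |s - 0| := by
    refine intervalIntegral.norm_integral_le_of_norm_le_const fun x hx => ?_
    have hx' := hsub hx
    have hx0 : 0 ≤ x := hx'.1
    have hxs : x ≤ s := hx'.2
    have := hg x hx'
    calc ‖x * g x‖ = |x| * |g x| := abs_mul _ _
    _ ≤ s * G := by
        apply mul_le_mul (by rwa [abs_of_nonneg hx0]) this (abs_nonneg _) (le_trans hx0 hxs)
    _ = G * s := mul_comm _ _
  rw [Real.norm_eq_abs] at h1 h2
  rw [sub_zero, abs_of_nonneg hs0] at h1 h2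
  have h0 : |Wop g s| ≤ |s * ∫ r in (0:ℝ)..s, g r| + |∫ r in (0:ℝ)..s, r * g r| := abs_sub _ _
  have h3 : |s * ∫ r in (0:ℝ)..s, g r| ≤ s * (G * s) := by
    rw [abs_mul, abs_of_nonneg hs0]
    exact mul_le_mul_of_nonneg_left h1 hs0
  nlinarith [abs_nonneg (∫ r in (0:ℝ)..s, g r)]

lemma Wop_hasDerivAt {g : ℝ → ℝ} (hg : Continuous g) (s : ℝ) :
    HasDerivAt (Wop g) (∫ r in (0:ℝ)..s, g r) s := by
  have hprim : HasDerivAt (fun u => ∫ r in (0:ℝ)..u, g r) (g s) s :=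
    intervalIntegral.integral_hasDerivAt_right (hg.intervalIntegrable _ _)
      (hg.stronglyMeasurableAtFilter _ _) hg.continuousAt
  have hprim2 : HasDerivAt (fun u => ∫ r in (0:ℝ)..u, r * g r) (s * g s) s :=
    intervalIntegral.integral_hasDerivAt_right
      ((continuous_id.mul hg).intervalIntegrable _ _)
      ((continuous_id.mul hg).stronglyMeasurableAtFilter _ _)
      (continuous_id.mul hg).continuousAt
  have h2 : HasDerivAt (Wop g)
      ((1 * ∫ r in (0:ℝ)..s, g r) + s * g s - s * g s) s :=
    ((hasDerivAt_id s).mul hprim).sub hprim2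
  simpa using h2

lemma Wop_continuous {g : ℝ → ℝ} (hg : Continuous g) : Continuous (Wop g) :=
  continuous_iff_continuousAt.2 fun s => (Wop_hasDerivAt hg s).continuousAt

lemma Wop_const_mul (c : ℝ) (g : ℝ → ℝ) (s : ℝ) :
    Wop (fun r => c * g r) s = c * Wop g s := by
  have e1 : ∫ r in (0:ℝ)..s, c * g r = c * ∫ r in (0:ℝ)..s, g r :=
    intervalIntegral.integral_const_mul c g
  have e2 : ∫ r in (0:ℝ)..s, r * (c * g r) = c * ∫ r in (0:ℝ)..s, r * g r := by
    rw [← intervalIntegral.integral_const_mul]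
    apply intervalIntegral.integral_congr
    intro x _; ring
  simp only [Wop, e1, e2]; ring

lemma Wop_sub {g₁ g₂ : ℝ → ℝ} {s : ℝ}
    (h1 : IntervalIntegrable g₁ volume 0 s) (h2 : IntervalIntegrable g₂ volume 0 s)
    (h1' : IntervalIntegrable (fun r => r * g₁ r) volume 0 s)
    (h2' : IntervalIntegrable (fun r => r * g₂ r) volume 0 s) :
    Wop (fun r => g₁ r - g₂ r) s = Wop g₁ s - Wop g₂ s := by
  have e1 : ∫ r in (0:ℝ)..s, (g₁ r - g₂ r) = (∫ r in (0:ℝ)..s, g₁ r) - ∫ r in (0:ℝ)..s, g₂ r :=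
    intervalIntegral.integral_sub h1 h2
  have e2 : ∫ r in (0:ℝ)..s, r * (g₁ r - g₂ r)
      = (∫ r in (0:ℝ)..s, r * g₁ r) - ∫ r in (0:ℝ)..s, r * g₂ r := by
    rw [← intervalIntegral.integral_sub h1' h2']
    apply intervalIntegral.integral_congr
    intro x _; ring
  simp only [Wop, e1, e2]; ring

noncomputable def fbar (f : C(Icc (0:ℝ) 1, ℝ)) : ℝ → ℝ :=
  fun r => f (projIcc 0 1 zero_le_one r)

lemma fbar_continuous (f : C(Icc (0:ℝ) 1, ℝ)) : Continuous (fbar f) :=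
  f.continuous.comp continuous_projIcc

lemma fbar_eq (f : C(Icc (0:ℝ) 1, ℝ)) {x : ℝ} (hx : x ∈ Icc (0:ℝ) 1) :
    fbar f x = f ⟨x, hx⟩ := by
  simp [fbar, projIcc_of_mem zero_le_one hx]

lemma fbar_dist_le (f g : C(Icc (0:ℝ) 1, ℝ)) (r : ℝ) :
    |fbar f r - fbar g r| ≤ dist f g := by
  have := ContinuousMap.dist_apply_le_dist (f := f) (g := g) (projIcc 0 1 zero_le_one r)
  rwa [Real.dist_eq] at this

noncomputable def Tmap (p : ℝ → ℝ) (hp : Continuous p) (f : C(Icc (0:ℝ) 1, ℝ)) :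
    C(Icc (0:ℝ) 1, ℝ) :=
  ⟨fun x => (x : ℝ) - Wop (fun r => p r * fbar f r) x, by
    have : Continuous fun s : ℝ => s - Wop (fun r => p r * fbar f r) s :=
      continuous_id.sub (Wop_continuous (hp.mul (fbar_continuous f)))
    exact this.comp continuous_subtype_val⟩

lemma Tmap_contract {p : ℝ → ℝ} (hp : Continuous p) (hb : ∀ r, |p r| ≤ 1/8) :
    ContractingWith (1/2 : NNReal) (Tmap p hp) := by
  constructor
  · rw [show ((1:NNReal)/2 : NNReal) < 1 ↔ ((1:NNReal)/2 : ℝ) < 1 from by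
      exact_mod_cast Iff.rfl]
    norm_num
  · apply LipschitzWith.of_dist_le_mul
    intro f g
    have hc : ((1/2 : NNReal) : ℝ) = 1/2 := by norm_num
    rw [hc]
    rw [ContinuousMap.dist_le (by positivity)]
    intro x
    have hx : (x : ℝ) ∈ Icc (0:ℝ) 1 := x.2
    have hint1 : IntervalIntegrable (fun r => p r * fbar f r) volume 0 x :=
      (hp.mul (fbar_continuous f)).intervalIntegrable _ _
    have hint2 : IntervalIntegrable (fun r => p r * fbar g r) volume 0 x :=
      (hp.mul (fbar_continuous g)).intervalIntegrable _ _
    have hint1' : IntervalIntegrable (fun r => r * (p r * fbar f r)) volume 0 x :=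
      (continuous_id.mul (hp.mul (fbar_continuous f))).intervalIntegrable _ _
    have hint2' : IntervalIntegrable (fun r => r * (p r * fbar g r)) volume 0 x :=
      (continuous_id.mul (hp.mul (fbar_continuous g))).intervalIntegrable _ _
    have key : Tmap p hp f x - Tmap p hp g x
        = -(Wop (fun r => p r * fbar f r - p r * fbar g r) x) := by
      rw [Wop_sub hint1 hint2 hint1' hint2']
      simp [Tmap]
    rw [Real.dist_eq, key, abs_neg]
    have hest : |Wop (fun r => p r * fbar f r - p r * fbar g r) (x:ℝ)|
        ≤ 2 * ((1/8) * dist f g) * (x:ℝ)^2 := by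
      apply Wop_est hx.1 hx.2 (by positivity)
      intro r _
      have : |p r * fbar f r - p r * fbar g r| = |p r| * |fbar f r - fbar g r| := by
        rw [← abs_mul]; ring_nf
      rw [this]
      exact mul_le_mul (hb r) (fbar_dist_le f g r) (abs_nonneg _) (by norm_num)
    have hx2 : (x:ℝ)^2 ≤ 1 := by nlinarith [hx.1, hx.2]
    nlinarith [dist_nonneg (x := f) (y := g)]

lemma Wop_congr {g₁ g₂ : ℝ → ℝ} {s : ℝ} (h : EqOn g₁ g₂ (uIcc 0 s)) :
    Wop g₁ s = Wop g₂ s := by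
  have e1 : ∫ r in (0:ℝ)..s, g₁ r = ∫ r in (0:ℝ)..s, g₂ r :=
    intervalIntegral.integral_congr h
  have e2 : ∫ r in (0:ℝ)..s, r * g₁ r = ∫ r in (0:ℝ)..s, r * g₂ r :=
    intervalIntegral.integral_congr (fun x hx => by rw [h hx])
  unfold Wop; rw [e1, e2]

open Classical in
noncomputable def solFix (p : ℝ → ℝ) : C(Icc (0:ℝ) 1, ℝ) :=
  if hc : Continuous p ∧ ∀ r, |p r| ≤ 1/8 then
    ContractingWith.fixedPoint (Tmap p hc.1) (Tmap_contract hc.1 hc.2)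
  else 0

noncomputable def sol (p : ℝ → ℝ) : ℝ → ℝ :=
  fun s => s - Wop (fun r => p r * fbar (solFix p) r) s

noncomputable def solD (p : ℝ → ℝ) : ℝ → ℝ :=
  fun s => 1 - ∫ r in (0:ℝ)..s, p r * fbar (solFix p) r

section SolProps

variable {p : ℝ → ℝ} (hp : Continuous p) (hb : ∀ r, |p r| ≤ 1/8)

include hp hb in
lemma solFix_isFixedPt : Function.IsFixedPt (Tmap p hp) (solFix p) := by
  rw [solFix, dif_pos (⟨hp, hb⟩ : Continuous p ∧ ∀ r, |p r| ≤ 1/8)]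
  exact ContractingWith.fixedPoint_isFixedPt _

include hp hb in
lemma sol_eq_fbar {x : ℝ} (hx : x ∈ Icc (0:ℝ) 1) : sol p x = fbar (solFix p) x := by
  rw [fbar_eq _ hx]
  conv_rhs => rw [← solFix_isFixedPt hp hb]
  rfl

include hp hb in
lemma solFix_close {ε : ℝ} (hε : ε ≤ 1/8) (hbe : ∀ r, |p r| ≤ ε) (x : Icc (0:ℝ) 1) :
    |(solFix p x : ℝ) - x| ≤ 4 * ε := by
  have hε0 : 0 ≤ ε := le_trans (abs_nonneg _) (hbe 0)
  set idC : C(Icc (0:ℝ) 1, ℝ) := ⟨fun y => (y : ℝ), continuous_subtype_val⟩ with hidC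
  have hd : dist idC (Tmap p hp idC) ≤ 2 * ε := by
    rw [ContinuousMap.dist_le (by positivity)]
    intro y
    rw [Real.dist_eq]
    have hval : (idC y : ℝ) - Tmap p hp idC y = Wop (fun r => p r * fbar idC r) y := by
      simp [Tmap, hidC]
    rw [hval]
    have hest := Wop_est (g := fun r => p r * fbar idC r) (G := ε) y.2.1 y.2.2 hε0 ?_
    · have hy2 : (y:ℝ)^2 ≤ 1 := by nlinarith [y.2.1, y.2.2]
      nlinarith
    · intro r _
      rw [abs_mul]
      have h1 : |fbar idC r| ≤ 1 := by
        have hm := (projIcc 0 1 zero_le_one r).2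
        have : fbar idC r = (projIcc 0 1 zero_le_one r : ℝ) := rfl
        rw [this, abs_le]
        exact ⟨by linarith [hm.1], hm.2⟩
      calc |p r| * |fbar idC r| ≤ ε * 1 :=
            mul_le_mul (hbe r) h1 (abs_nonneg _) hε0
      _ = ε := mul_one ε
  have hfix : Function.IsFixedPt (Tmap p hp) (solFix p) := solFix_isFixedPt hp hb
  have h2 := (Tmap_contract hp hb).dist_le_of_fixedPoint idC hfix
  have hK : (1 - ((1/2 : NNReal) : ℝ)) = 1/2 := by norm_num
  rw [hK] at h2
  have h4 : dist idC (Tmap p hp idC) / (1/2) = 2 * dist idC (Tmap p hp idC) := by ring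
  rw [h4] at h2
  have h5 : |(solFix p x : ℝ) - (x : ℝ)| = dist ((solFix p) x) (idC x) := by
    rw [Real.dist_eq]; rfl
  rw [h5]
  calc dist ((solFix p) x) (idC x) ≤ dist (solFix p) idC :=
        ContinuousMap.dist_apply_le_dist x
  _ = dist idC (solFix p) := dist_comm _ _
  _ ≤ 2 * dist idC (Tmap p hp idC) := h2
  _ ≤ 4 * ε := by linarith

include hp hb in
lemma sol_close {ε : ℝ} (hε : ε ≤ 1/8) (hbe : ∀ r, |p r| ≤ ε) {x : ℝ} (hx : x ∈ Icc (0:ℝ) 1) :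
    |sol p x - x| ≤ 3 * ε * x ^ 2 := by
  have hε0 : 0 ≤ ε := le_trans (abs_nonneg _) (hbe 0)
  have hval : sol p x - x = -Wop (fun r => p r * fbar (solFix p) r) x := by simp [sol]
  rw [hval, abs_neg]
  have hest := Wop_est (g := fun r => p r * fbar (solFix p) r) (G := (3/2) * ε)
      hx.1 hx.2 (by positivity) ?_
  · nlinarith [sq_nonneg x]
  · intro r _
    rw [abs_mul]
    set y := projIcc 0 1 zero_le_one r with hy
    have hm := y.2
    have hcl := solFix_close hp hb hε hbe y
    have h1 : |fbar (solFix p) r| ≤ 3/2 := by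
      have : fbar (solFix p) r = (solFix p) y := rfl
      rw [this]
      have : |((solFix p) y : ℝ)| ≤ |((solFix p) y : ℝ) - (y:ℝ)| + |(y:ℝ)| := by
        have := abs_sub_abs_le_abs_sub ((solFix p) y : ℝ) (y : ℝ)
        have h2 : |(y:ℝ)| ≤ 1 := by rw [abs_le]; exact ⟨by linarith [hm.1], hm.2⟩
        calc |((solFix p) y : ℝ)| = |(((solFix p) y : ℝ) - y) + y| := by ring_nf
        _ ≤ |((solFix p) y : ℝ) - y| + |(y:ℝ)| := abs_add_le _ _
      have h2 : |(y:ℝ)| ≤ 1 := by rw [abs_le]; exact ⟨by linarith [hm.1], hm.2⟩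
      linarith
    calc |p r| * |fbar (solFix p) r| ≤ ε * (3/2) :=
          mul_le_mul (hbe r) h1 (abs_nonneg _) hε0
    _ = 3/2 * ε := by ring

include hp in
lemma sol_hasDerivAt (s : ℝ) : HasDerivAt (sol p) (solD p s) s := by
  have := (hasDerivAt_id s).sub (Wop_hasDerivAt (hp.mul (fbar_continuous (solFix p))) s)
  exact this

include hp in
lemma solD_hasDerivAt (s : ℝ) : HasDerivAt (solD p) (-(p s * fbar (solFix p) s)) s := by
  have h := intervalIntegral.integral_hasDerivAt_right
      ((hp.mul (fbar_continuous (solFix p))).intervalIntegrable 0 s)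
      ((hp.mul (fbar_continuous (solFix p))).stronglyMeasurableAtFilter _ _)
      (hp.mul (fbar_continuous (solFix p))).continuousAt
  have := (hasDerivAt_const s (1:ℝ)).sub h
  rw [zero_sub] at this
  exact this

include hp hb in
lemma sol_inteq {s : ℝ} (hs : s ∈ Icc (0:ℝ) 1) :
    sol p s = s - Wop (fun r => p r * sol p r) s := by
  have hW : Wop (fun r => p r * fbar (solFix p) r) s = Wop (fun r => p r * sol p r) s := by
    apply Wop_congr
    intro x hx
    have hsub : uIcc (0:ℝ) s ⊆ Icc 0 1 := by
      rw [uIcc_of_le hs.1]; exact Icc_subset_Icc le_rfl hs.2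
    have hx1 : x ∈ Icc (0:ℝ) 1 := hsub hx
    simp only []
    rw [sol_eq_fbar hp hb hx1]
  show s - Wop (fun r => p r * fbar (solFix p) r) s = _
  rw [hW]

end SolProps

lemma sturm_integral_eq {p w w₁ w₂ : ℝ → ℝ}
    (hw : ∀ x ∈ Icc (0:ℝ) 1, HasDerivWithinAt w (w₁ x) (Icc 0 1) x)
    (hw1 : ∀ x ∈ Icc (0:ℝ) 1, HasDerivWithinAt w₁ (w₂ x) (Icc 0 1) x)
    (hw2 : ContinuousOn w₂ (Icc 0 1))
    (heq : ∀ x ∈ Icc (0:ℝ) 1, w₂ x + p x * w x = 0)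
    (h0 : w 0 = 0) {s : ℝ} (hs : s ∈ Icc (0:ℝ) 1) :
    w s = w₁ 0 * s - Wop (fun r => p r * w r) s := by
  obtain ⟨hs0, hs1⟩ := hs
  have hIcc : Icc (0:ℝ) s ⊆ Icc 0 1 := Icc_subset_Icc le_rfl hs1
  have hwc : ContinuousOn w (Icc 0 1) := fun x hx => (hw x hx).continuousWithinAt
  have hw1c : ContinuousOn w₁ (Icc 0 1) := fun x hx => (hw1 x hx).continuousWithinAt
  -- derivatives at interior points
  have hin : ∀ x ∈ Ioo (0:ℝ) s, Icc (0:ℝ) 1 ∈ nhds x := by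
    intro x hx
    exact Icc_mem_nhds hx.1 (lt_of_lt_of_le hx.2 hs1)
  have hwd : ∀ x ∈ Ioo (0:ℝ) s, HasDerivAt w (w₁ x) x := fun x hx =>
    (hw x (hIcc (Ioo_subset_Icc_self hx))).hasDerivAt (hin x hx)
  have hw1d : ∀ x ∈ Ioo (0:ℝ) s, HasDerivAt w₁ (w₂ x) x := fun x hx =>
    (hw1 x (hIcc (Ioo_subset_Icc_self hx))).hasDerivAt (hin x hx)
  have hu : uIcc (0:ℝ) s = Icc 0 s := uIcc_of_le hs0
  -- FTC for w₁
  have I2 : ∫ r in (0:ℝ)..s, w₂ r = w₁ s - w₁ 0 := by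
    apply intervalIntegral.integral_eq_sub_of_hasDeriv_right_of_le hs0
      (hw1c.mono hIcc)
      (fun x hx => (hw1d x hx).hasDerivWithinAt)
      (((hw2.mono hIcc).mono (by rw [hu] : uIcc (0:ℝ) s ⊆ Icc 0 s)).intervalIntegrable)
  -- FTC for w
  have I1 : ∫ r in (0:ℝ)..s, w₁ r = w s := by
    have := intervalIntegral.integral_eq_sub_of_hasDeriv_right_of_le hs0
      (hwc.mono hIcc)
      (fun x hx => (hwd x hx).hasDerivWithinAt)
      (((hw1c.mono hIcc).mono (by rw [hu] : uIcc (0:ℝ) s ⊆ Icc 0 s)).intervalIntegrable)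
    rw [this, h0, sub_zero]
  -- integration by parts for r * w₁ r
  have I3 : ∫ r in (0:ℝ)..s, (w₁ r + r * w₂ r) = s * w₁ s := by
    have hP : ∀ x ∈ Ioo (0:ℝ) s,
        HasDerivWithinAt (fun r => r * w₁ r) (w₁ x + x * w₂ x) (Ioi x) x := by
      intro x hx
      have := (hasDerivAt_id x).mul (hw1d x hx)
      have h2 : (1 : ℝ) * w₁ x + id x * w₂ x = w₁ x + x * w₂ x := by simp
      exact (h2 ▸ this).hasDerivWithinAt
    have hcontP : ContinuousOn (fun r => r * w₁ r) (Icc 0 s) :=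
      continuousOn_id.mul (hw1c.mono hIcc)
    have hintP : IntervalIntegrable (fun r => w₁ r + r * w₂ r) volume 0 s := by
      apply ContinuousOn.intervalIntegrable
      rw [hu]
      exact (hw1c.mono hIcc).add (continuousOn_id.mul (hw2.mono hIcc))
    have := intervalIntegral.integral_eq_sub_of_hasDeriv_right_of_le hs0 hcontP hP hintP
    simpa using this
  have hi1 : IntervalIntegrable w₁ volume 0 s := by
    apply ContinuousOn.intervalIntegrable; rw [hu]; exact hw1c.mono hIcc
  have hi2 : IntervalIntegrable (fun r => r * w₂ r) volume 0 s := by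
    apply ContinuousOn.intervalIntegrable; rw [hu]
    exact continuousOn_id.mul (hw2.mono hIcc)
  have I4 : ∫ r in (0:ℝ)..s, r * w₂ r = s * w₁ s - w s := by
    have h5 := intervalIntegral.integral_add hi1 hi2
    rw [I3] at h5
    rw [I1] at h5
    linarith
  have e1 : ∫ r in (0:ℝ)..s, p r * w r = -(w₁ s - w₁ 0) := by
    rw [show (∫ r in (0:ℝ)..s, p r * w r) = ∫ r in (0:ℝ)..s, -w₂ r from
      intervalIntegral.integral_congr (fun x hx => by
        have hx1 : x ∈ Icc (0:ℝ) 1 := hIcc (hu ▸ hx)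
        have := heq x hx1
        linarith)]
    rw [intervalIntegral.integral_neg, I2]
  have e2 : ∫ r in (0:ℝ)..s, r * (p r * w r) = -(s * w₁ s - w s) := by
    rw [show (∫ r in (0:ℝ)..s, r * (p r * w r)) = ∫ r in (0:ℝ)..s, -(r * w₂ r) from
      intervalIntegral.integral_congr (fun x hx => by
        have hx1 : x ∈ Icc (0:ℝ) 1 := hIcc (hu ▸ hx)
        have := heq x hx1
        linear_combination x * this)]
    rw [intervalIntegral.integral_neg, I4]
  show w s = w₁ 0 * s -
    (s * (∫ r in (0:ℝ)..s, p r * w r) - ∫ r in (0:ℝ)..s, r * (p r * w r))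
  rw [e1, e2]
  ring

lemma Wop_linear (C s : ℝ) : Wop (fun r => C * r) s = C * s ^ 3 / 6 := by
  have e1 : ∫ r in (0:ℝ)..s, C * r = C * (s ^ 2 / 2) := by
    rw [intervalIntegral.integral_const_mul, integral_id]
    ring
  have e2 : ∫ r in (0:ℝ)..s, r * (C * r) = C * (s ^ 3 / 3) := by
    have : (fun r : ℝ => r * (C * r)) = fun r : ℝ => C * r ^ 2 := by
      funext r; ring
    rw [this, intervalIntegral.integral_const_mul, integral_pow]
    norm_num
  unfold Wop
  rw [e1, e2]
  ring

/-- `u` is a (twice continuously differentiable) solution of `u'' + κ·u = 0` on the set `s`,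
with first and second derivative functions `u'` and `u''`. -/
def SturmSol (κ u u' u'' : ℝ → ℝ) (s : Set ℝ) : Prop :=
  (∀ t ∈ s, HasDerivWithinAt u (u' t) s t) ∧
  (∀ t ∈ s, HasDerivWithinAt u' (u'' t) s t) ∧
  ContinuousOn u'' s ∧
  (∀ t ∈ s, u'' t + κ t * u t = 0)

set_option maxHeartbeats 2000000 in
/-- Second-order Taylor expansion
`σ_κ^{(t)}(h) = t·[1 + (1/6)(1−t²)κ(0)h²] + o(h²)` of the distortion coefficient
in the length parameter. -/
theorem distortion_taylor_expansion
    (L : ℝ) (hL : 0 < L)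
    (κ : ℝ → ℝ) (hκ : ContinuousOn κ (Icc 0 L))
    (t : ℝ) (ht : t ∈ Ioo (0:ℝ) 1) :
    ∃ h₀ ∈ Ioc (0:ℝ) L, ∃ u : ℝ → ℝ → ℝ,
      (∀ h ∈ Ioc (0:ℝ) h₀,
        (∃ u₁ u₂ : ℝ → ℝ,
          SturmSol (fun s => κ (s * h) * h ^ 2) (u h) u₁ u₂ (Icc 0 1)) ∧
        u h 0 = 0 ∧ u h 1 = 1 ∧
        (∀ s ∈ Ioc (0:ℝ) 1, 0 < u h s) ∧
        (∀ w w₁ w₂ : ℝ → ℝ,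
          SturmSol (fun s => κ (s * h) * h ^ 2) w w₁ w₂ (Icc 0 1) →
          w 0 = 0 → w 1 = 1 → ∀ s ∈ Icc (0:ℝ) 1, w s = u h s)) ∧
      Filter.Tendsto (fun h => (u h t - t) / h ^ 2)
        (nhdsWithin 0 (Ioi 0))
        (nhds ((1 / 6) * t * (1 - t ^ 2) * κ 0)) := by
  obtain ⟨ht0, ht1⟩ := ht
  -- the clamped curvature
  set cl : ℝ → ℝ := fun x => max 0 (min x L) with hcl
  have hclmem : ∀ x, cl x ∈ Icc 0 L := fun x =>
    ⟨le_max_left _ _, max_le hL.le (min_le_right _ _)⟩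
  have hclcont : Continuous cl := continuous_const.max (continuous_id.min continuous_const)
  have hcl_id : ∀ x ∈ Icc 0 L, cl x = x := by
    intro x hx
    simp only [hcl]
    rw [min_eq_left hx.2, max_eq_right hx.1]
  set κ' : ℝ → ℝ := fun x => κ (cl x) with hκ'
  have hκ'cont : Continuous κ' := hκ.comp_continuous hclcont hclmem
  have hκ'0 : κ' 0 = κ 0 := by
    simp only [hκ']
    rw [hcl_id 0 ⟨le_rfl, hL.le⟩]
  have hκ'eq : ∀ x ∈ Icc 0 L, κ' x = κ x := by
    intro x hx; simp only [hκ']; rw [hcl_id x hx]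
  -- bound for κ'
  obtain ⟨M0, hM0⟩ := (isCompact_Icc (a := (0:ℝ)) (b := L)).exists_bound_of_continuousOn hκ
  set M : ℝ := max M0 0 with hM
  have hM0' : 0 ≤ M := le_max_right _ _
  have hMb : ∀ x, |κ' x| ≤ M := by
    intro x
    calc |κ' x| = ‖κ (cl x)‖ := rfl
    _ ≤ M0 := hM0 _ (hclmem x)
    _ ≤ M := le_max_left _ _
  -- choice of h₀
  set h₀ : ℝ := min L (1 / (4 * (M + 1))) with hh₀
  have hh₀pos : 0 < h₀ := lt_min hL (by positivity)
  have hh₀L : h₀ ≤ L := min_le_left _ _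
  have hsmall : ∀ h ∈ Ioc (0:ℝ) h₀, M * h ^ 2 ≤ 1 / 16 := by
    rintro h ⟨hh0, hhle⟩
    have h1 : h ≤ 1 / (4 * (M + 1)) := le_trans hhle (min_le_right _ _)
    have h2 : h ^ 2 ≤ (1 / (4 * (M + 1))) ^ 2 := by nlinarith
    calc M * h ^ 2 ≤ M * (1 / (4 * (M + 1))) ^ 2 := by nlinarith
    _ ≤ 1 / 16 := by
        rw [div_pow, one_pow, mul_one_div]
        rw [div_le_div_iff₀ (by positivity) (by norm_num)]
        nlinarith [sq_nonneg M, hM0']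
  -- the coefficient function
  set p : ℝ → ℝ → ℝ := fun h r => κ' (r * h) * h ^ 2 with hp
  have hpcont : ∀ h, Continuous (p h) :=
    fun h => (hκ'cont.comp (continuous_id.mul continuous_const)).mul continuous_const
  have hpb : ∀ h r, |p h r| ≤ M * h ^ 2 := by
    intro h r
    calc |p h r| = |κ' (r * h)| * |h ^ 2| := abs_mul _ _
    _ = |κ' (r * h)| * h ^ 2 := by rw [abs_of_nonneg (sq_nonneg h)]
    _ ≤ M * h ^ 2 := mul_le_mul_of_nonneg_right (hMb _) (sq_nonneg h)
  have hb8 : ∀ h ∈ Ioc (0:ℝ) h₀, ∀ r, |p h r| ≤ 1/8 := by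
    intro h hh r
    calc |p h r| ≤ M * h ^ 2 := hpb h r
    _ ≤ 1/16 := hsmall h hh
    _ ≤ 1/8 := by norm_num
  have hb16 : ∀ h ∈ Ioc (0:ℝ) h₀, ∀ r, |p h r| ≤ M * h ^ 2 := fun h _ r => hpb h r
  -- p agrees with the unclamped coefficient on the unit interval
  have hpeq : ∀ h ∈ Ioc (0:ℝ) h₀, ∀ s ∈ Icc (0:ℝ) 1, p h s = κ (s * h) * h ^ 2 := by
    rintro h ⟨hh0, hhle⟩ s hs
    have : s * h ∈ Icc 0 L := by
      constructor
      · exact mul_nonneg hs.1 hh0.le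
      · calc s * h ≤ 1 * h := mul_le_mul_of_nonneg_right hs.2 hh0.le
        _ = h := one_mul h
        _ ≤ L := le_trans hhle hh₀L
    simp only [hp]
    rw [hκ'eq _ this]
  -- the solution
  refine ⟨h₀, ⟨hh₀pos, hh₀L⟩, fun h s => sol (p h) s / sol (p h) 1, ?_, ?_⟩
  · -- existence, positivity, uniqueness for each h
    intro h hh
    have hPc : Continuous (p h) := hpcont h
    have hP8 : ∀ r, |p h r| ≤ 1/8 := hb8 h hh
    have hPM : ∀ r, |p h r| ≤ M * h ^ 2 := hpb h
    have hMh16 : M * h ^ 2 ≤ 1/16 := hsmall h hh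
    have hMh8 : M * h ^ 2 ≤ 1/8 := le_trans hMh16 (by norm_num)
    have hsolc : Continuous (sol (p h)) :=
      continuous_iff_continuousAt.2 fun s => (sol_hasDerivAt hPc s).continuousAt
    have hclose : ∀ x ∈ Icc (0:ℝ) 1, |sol (p h) x - x| ≤ 3 * (M * h ^ 2) * x ^ 2 :=
      fun x hx => sol_close hPc hP8 hMh8 hPM hx
    have hV1 : |sol (p h) 1 - 1| ≤ 3/16 := by
      have := hclose 1 ⟨zero_le_one, le_rfl⟩
      calc |sol (p h) 1 - 1| ≤ 3 * (M * h ^ 2) * 1 ^ 2 := this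
      _ ≤ 3/16 := by nlinarith
    have hV1pos : 0 < sol (p h) 1 := by
      have := abs_le.1 hV1
      linarith [this.1]
    have hV0 : sol (p h) 0 = 0 := by
      simp [sol, Wop]
    have hposV : ∀ s ∈ Ioc (0:ℝ) 1, 0 < sol (p h) s := by
      rintro s ⟨hs0, hs1⟩
      have hc := hclose s ⟨hs0.le, hs1⟩
      have h1 := (abs_le.1 hc).1
      have hs2 : s ^ 2 ≤ s := by nlinarith
      nlinarith
    refine ⟨?_, ?_, ?_, ?_, ?_⟩
    · -- SturmSol for u h
      refine ⟨fun s => solD (p h) s / sol (p h) 1,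
        fun s => -(κ (s * h) * h ^ 2 * (sol (p h) s / sol (p h) 1)), ?_, ?_, ?_, ?_⟩
      · intro x hx
        exact ((sol_hasDerivAt hPc x).div_const _).hasDerivWithinAt
      · intro x hx
        have hd := ((solD_hasDerivAt hPc x).div_const (sol (p h) 1)).hasDerivWithinAt
          (s := Icc (0:ℝ) 1)
        have hval : -(p h x * fbar (solFix (p h)) x) / sol (p h) 1
            = -(κ (x * h) * h ^ 2 * (sol (p h) x / sol (p h) 1)) := by
          rw [← sol_eq_fbar hPc hP8 hx, ← hpeq h hh x hx]
          ring
        rw [hval] at hd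
        exact hd
      · have hcont : Continuous fun s => -(p h s * (sol (p h) s / sol (p h) 1)) :=
          (hPc.mul (hsolc.div_const _)).neg
        apply hcont.continuousOn.congr
        intro x hx
        simp only []
        rw [← hpeq h hh x hx]
      · intro x hx
        ring
    · -- u h 0 = 0
      simp only [hV0, zero_div]
    · -- u h 1 = 1
      exact div_self hV1pos.ne'
    · -- positivity
      intro s hs
      exact div_pos (hposV s hs) hV1pos
    · -- uniqueness
      intro w w₁ w₂ hw hw0 hw1
      obtain ⟨hwd, hw1d, hw2c, hweq⟩ := hw
      have hwc : ContinuousOn w (Icc 0 1) := fun x hx => (hwd x hx).continuousWithinAt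
      have hweq' : ∀ x ∈ Icc (0:ℝ) 1, w₂ x + p h x * w x = 0 := by
        intro x hx; rw [hpeq h hh x hx]; exact hweq x hx
      have hInt : ∀ s ∈ Icc (0:ℝ) 1,
          w s = w₁ 0 * s - Wop (fun r => p h r * w r) s :=
        fun s hs => sturm_integral_eq hwd hw1d hw2c hweq' hw0 hs
      set c : ℝ := w₁ 0 with hcdef
      set z : ℝ → ℝ := fun s => c * sol (p h) s with hz
      have hzc : Continuous z := continuous_const.mul hsolc
      have hzInt : ∀ s ∈ Icc (0:ℝ) 1, z s = c * s - Wop (fun r => p h r * z r) s := by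
        intro s hs
        have h1 := sol_inteq hPc hP8 hs
        have h2 : Wop (fun r => p h r * z r) s
            = c * Wop (fun r => p h r * sol (p h) r) s := by
          rw [← Wop_const_mul]
          apply Wop_congr
          intro x hx
          simp only [hz]
          ring
        simp only [hz]
        rw [h2, h1]
        ring
      -- contraction estimate
      set wC : C(Icc (0:ℝ) 1, ℝ) := ⟨(Icc (0:ℝ) 1).restrict w, hwc.restrict⟩ with hwC
      set zC : C(Icc (0:ℝ) 1, ℝ) := ⟨(Icc (0:ℝ) 1).restrict z, hzc.continuousOn.restrict⟩
        with hzC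
      set D : ℝ := dist wC zC with hD
      have hDpt : ∀ x : Icc (0:ℝ) 1, |w (x:ℝ) - z (x:ℝ)| ≤ D := by
        intro x
        have := ContinuousMap.dist_apply_le_dist (f := wC) (g := zC) x
        rwa [Real.dist_eq] at this
      have hkey : ∀ x : Icc (0:ℝ) 1, |w (x:ℝ) - z (x:ℝ)| ≤ (1/8) * D := by
        intro x
        have hx := x.2
        have hxsub : uIcc (0:ℝ) (x:ℝ) ⊆ Icc 0 1 := by
          rw [uIcc_of_le hx.1]; exact Icc_subset_Icc le_rfl hx.2
        have int1 : IntervalIntegrable (fun r => p h r * w r) volume 0 x :=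
          (hPc.continuousOn.mul (hwc.mono hxsub)).intervalIntegrable
        have int2 : IntervalIntegrable (fun r => p h r * z r) volume 0 x :=
          ((hPc.mul hzc).continuousOn).intervalIntegrable
        have int1' : IntervalIntegrable (fun r => r * (p h r * w r)) volume 0 x :=
          (continuousOn_id.mul (hPc.continuousOn.mul (hwc.mono hxsub))).intervalIntegrable
        have int2' : IntervalIntegrable (fun r => r * (p h r * z r)) volume 0 x :=
          (continuousOn_id.mul ((hPc.mul hzc).continuousOn)).intervalIntegrable
        have hsub := Wop_sub int1 int2 int1' int2'
        have hdiff : w (x:ℝ) - z (x:ℝ)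
            = -(Wop (fun r => p h r * w r - p h r * z r) (x:ℝ)) := by
          rw [hsub, hInt x hx, hzInt x hx]
          ring
        rw [hdiff, abs_neg]
        have hest := Wop_est (g := fun r => p h r * w r - p h r * z r)
          (G := (M * h ^ 2) * D) x.2.1 x.2.2
          (mul_nonneg (by positivity) dist_nonneg) ?_
        · have hx2 : (x:ℝ) ^ 2 ≤ 1 := by nlinarith [x.2.1, x.2.2]
          have hDn : 0 ≤ D := dist_nonneg
          have h5 : M * h ^ 2 * D ≤ (1/16) * D := mul_le_mul_of_nonneg_right hMh16 hDn
          have h6 : 0 ≤ M * h ^ 2 * D := by positivity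
          nlinarith [hest, hx2, hDn, h5, h6]
        · intro r hr
          have hrI : r ∈ Icc (0:ℝ) 1 := ⟨hr.1, le_trans hr.2 hx.2⟩
          show |p h r * w r - p h r * z r| ≤ M * h ^ 2 * D
          have heq2 : p h r * w r - p h r * z r = p h r * (w r - z r) := by ring
          rw [heq2, abs_mul]
          have h1 := hDpt ⟨r, hrI⟩
          exact mul_le_mul (hPM r) h1 (abs_nonneg _) (by positivity)
      have hD0 : D = 0 := by
        have hle : D ≤ (1/8) * D := by
          rw [hD, ContinuousMap.dist_le (mul_nonneg (by norm_num) dist_nonneg)]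
          intro x
          rw [Real.dist_eq]
          exact hkey x
        have := dist_nonneg (x := wC) (y := zC)
        linarith
      have hwz : ∀ s ∈ Icc (0:ℝ) 1, w s = z s := by
        intro s hs
        have := hkey ⟨s, hs⟩
        rw [hD0] at this
        simp only [mul_zero] at this
        have := abs_le.1 this
        linarith [this.1, this.2]
      have hc1 : c * sol (p h) 1 = 1 := by
        have := hwz 1 ⟨zero_le_one, le_rfl⟩
        simp only [hz] at this
        linarith [hw1 ▸ this]
      intro s hs
      have hws := hwz s hs
      rw [hws]
      simp only [hz]
      have hcval : c = 1 / sol (p h) 1 := by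
        rw [eq_div_iff hV1pos.ne']
        exact hc1
      rw [hcval]
      ring
  · -- the limit
    have hκ'at : ContinuousAt κ' 0 := hκ'cont.continuousAt
    have key : ∀ s ∈ Icc (0:ℝ) 1,
        Filter.Tendsto (fun h => (sol (p h) s - s) / h ^ 2) (nhdsWithin 0 (Ioi 0))
          (nhds (-(κ' 0) * s ^ 3 / 6)) := by
      intro s hs
      rw [Metric.tendsto_nhdsWithin_nhds]
      intro ε hε
      obtain ⟨δ₁, hδ₁pos, hδ₁⟩ := Metric.continuousAt_iff.1 hκ'at (ε / 8) (by positivity)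
      refine ⟨min h₀ (min δ₁ (min 1 (ε / (16 * (M ^ 2 + 1))))), by positivity, ?_⟩
      intro h hhIoi hdist
      rw [Real.dist_eq, sub_zero] at hdist
      have hh0 : (0:ℝ) < h := hhIoi
      rw [abs_of_pos hh0] at hdist
      have hhh₀ : h ∈ Ioc (0:ℝ) h₀ := ⟨hh0, le_of_lt (lt_of_lt_of_le hdist (min_le_left _ _))⟩
      have hhδ₁ : h < δ₁ :=
        lt_of_lt_of_le hdist (le_trans (min_le_right _ _) (min_le_left _ _))
      have hh1 : h < 1 := lt_of_lt_of_le hdist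
        (le_trans (min_le_right _ _) (le_trans (min_le_right _ _) (min_le_left _ _)))
      have hhε : h < ε / (16 * (M ^ 2 + 1)) := lt_of_lt_of_le hdist
        (le_trans (min_le_right _ _) (le_trans (min_le_right _ _) (min_le_right _ _)))
      have hPc := hpcont h
      have hP8 := hb8 h hhh₀
      have hPM := hpb h
      have hMh16 := hsmall h hhh₀
      have hMh8 : M * h ^ 2 ≤ 1/8 := le_trans hMh16 (by norm_num)
      have hq : (sol (p h) s - s) / h ^ 2
          = -Wop (fun r => κ' (r * h) * fbar (solFix (p h)) r) s := by
        have h1 : sol (p h) s - s = -Wop (fun r => p h r * fbar (solFix (p h)) r) s := by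
          simp [sol]
        have h2 : Wop (fun r => p h r * fbar (solFix (p h)) r) s
            = h ^ 2 * Wop (fun r => κ' (r * h) * fbar (solFix (p h)) r) s := by
          rw [← Wop_const_mul]
          apply Wop_congr
          intro x _
          simp only [hp]
          ring
        rw [h1, h2, neg_div, mul_comm, mul_div_assoc, div_self (pow_ne_zero 2 hh0.ne'),
          mul_one]
      have htarget : -(κ' 0) * s ^ 3 / 6 = -Wop (fun r => κ' 0 * r) s := by
        rw [Wop_linear]; ring
      rw [Real.dist_eq, hq, htarget]
      have hg1c : Continuous fun r => κ' (r * h) * fbar (solFix (p h)) r :=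
        (hκ'cont.comp (continuous_id.mul continuous_const)).mul
          (fbar_continuous (solFix (p h)))
      have hg0c : Continuous fun r : ℝ => κ' 0 * r := continuous_const.mul continuous_id
      have hWsub := Wop_sub
        (hg1c.intervalIntegrable 0 s) (hg0c.intervalIntegrable 0 s)
        ((continuous_id.mul hg1c).intervalIntegrable 0 s)
        ((continuous_id.mul hg0c).intervalIntegrable 0 s)
      have hdiffeq : -Wop (fun r => κ' (r * h) * fbar (solFix (p h)) r) s
          - -Wop (fun r => κ' 0 * r) s
          = -(Wop (fun r => κ' (r * h) * fbar (solFix (p h)) r - κ' 0 * r) s) := by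
        rw [hWsub]; ring
      rw [hdiffeq, abs_neg]
      have hest := Wop_est (g := fun r => κ' (r * h) * fbar (solFix (p h)) r - κ' 0 * r)
        (G := 4 * M ^ 2 * h ^ 2 + ε / 8) hs.1 hs.2 (by positivity) ?_
      · have hs2 : s ^ 2 ≤ 1 := by nlinarith [hs.1, hs.2]
        have hM2 : 8 * M ^ 2 * h ^ 2 < ε / 2 := by
          have hh2 : h ^ 2 ≤ h := by nlinarith
          have h3 : h * (16 * (M ^ 2 + 1)) < ε := (lt_div_iff₀ (by positivity)).1 hhε
          nlinarith [sq_nonneg M, hh0.le]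
        nlinarith [sq_nonneg M, sq_nonneg h, hε]
      · intro r hr
        have hrI : r ∈ Icc (0:ℝ) 1 := ⟨hr.1, le_trans hr.2 hs.2⟩
        show |κ' (r * h) * fbar (solFix (p h)) r - κ' 0 * r| ≤ 4 * M ^ 2 * h ^ 2 + ε / 8
        have hsplit : κ' (r * h) * fbar (solFix (p h)) r - κ' 0 * r
            = κ' (r * h) * (fbar (solFix (p h)) r - r) + (κ' (r * h) - κ' 0) * r := by
          ring
        rw [hsplit]
        have hfb : |fbar (solFix (p h)) r - r| ≤ 4 * (M * h ^ 2) := by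
          rw [fbar_eq _ hrI]
          exact solFix_close hPc hP8 hMh8 hPM ⟨r, hrI⟩
        have hterm1 : |κ' (r * h) * (fbar (solFix (p h)) r - r)| ≤ 4 * M ^ 2 * h ^ 2 := by
          rw [abs_mul]
          calc |κ' (r * h)| * |fbar (solFix (p h)) r - r| ≤ M * (4 * (M * h ^ 2)) :=
            mul_le_mul (hMb _) hfb (abs_nonneg _) hM0'
          _ = 4 * M ^ 2 * h ^ 2 := by ring
        have hterm2 : |(κ' (r * h) - κ' 0) * r| ≤ ε / 8 := by
          rw [abs_mul]
          have hd : dist (r * h) 0 < δ₁ := by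
            rw [Real.dist_eq, sub_zero, abs_of_nonneg (mul_nonneg hrI.1 hh0.le)]
            calc r * h ≤ 1 * h := mul_le_mul_of_nonneg_right hrI.2 hh0.le
            _ = h := one_mul h
            _ < δ₁ := hhδ₁
          have h1 := hδ₁ hd
          rw [Real.dist_eq] at h1
          have h2 : |r| ≤ 1 := abs_le.2 ⟨by linarith [hrI.1], hrI.2⟩
          calc |κ' (r * h) - κ' 0| * |r| ≤ (ε/8) * 1 :=
            mul_le_mul h1.le h2 (abs_nonneg _) (by positivity)
          _ = ε / 8 := mul_one _
        calc |κ' (r * h) * (fbar (solFix (p h)) r - r) + (κ' (r * h) - κ' 0) * r|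
            ≤ |κ' (r * h) * (fbar (solFix (p h)) r - r)| + |(κ' (r * h) - κ' 0) * r| :=
              abs_add_le _ _
        _ ≤ 4 * M ^ 2 * h ^ 2 + ε / 8 := add_le_add hterm1 hterm2
    have hA := key t ⟨ht0.le, ht1.le⟩
    have hB := key 1 ⟨zero_le_one, le_rfl⟩
    have hh2 : Filter.Tendsto (fun h : ℝ => h ^ 2) (nhdsWithin 0 (Ioi 0)) (nhds 0) := by
      have h1 := ((continuous_pow 2).tendsto (0:ℝ)).mono_left
        (nhdsWithin_le_nhds (s := Ioi (0:ℝ)))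
      simpa using h1
    have hev : ∀ᶠ h in nhdsWithin (0:ℝ) (Ioi 0), h ∈ Ioc (0:ℝ) h₀ :=
      Ioc_mem_nhdsGT_of_mem ⟨le_rfl, hh₀pos⟩
    have hV1p : ∀ h ∈ Ioc (0:ℝ) h₀, 0 < sol (p h) 1 := by
      intro h hh
      have hMh16 := hsmall h hh
      have hMh8 : M * h ^ 2 ≤ 1/8 := le_trans hMh16 (by norm_num)
      have hc := sol_close (hpcont h) (hb8 h hh) hMh8 (hpb h)
        (⟨zero_le_one, le_rfl⟩ : (1:ℝ) ∈ Icc (0:ℝ) 1)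
      have h2 := (abs_le.1 hc).1
      nlinarith [h2, hMh16]
    have hC : Filter.Tendsto (fun h => sol (p h) 1) (nhdsWithin 0 (Ioi 0)) (nhds 1) := by
      have h1 : Filter.Tendsto (fun h : ℝ => 1 + (sol (p h) 1 - 1) / h ^ 2 * h ^ 2)
          (nhdsWithin (0:ℝ) (Ioi 0)) (nhds (1 + -(κ' 0) * 1 ^ 3 / 6 * 0)) :=
        tendsto_const_nhds.add (hB.mul hh2)
      rw [show (1:ℝ) + -(κ' 0) * 1 ^ 3 / 6 * 0 = 1 by ring] at h1
      apply h1.congr'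
      filter_upwards [self_mem_nhdsWithin] with h hh
      have hh0 : (0:ℝ) < h := hh
      field_simp
      ring
    have hfinal := (hA.sub (hB.const_mul t)).div hC one_ne_zero
    have hvaleq : (-(κ' 0) * t ^ 3 / 6 - t * (-(κ' 0) * 1 ^ 3 / 6)) / 1
        = 1 / 6 * t * (1 - t ^ 2) * κ 0 := by
      rw [hκ'0]
      ring
    rw [← hvaleq]
    apply hfinal.congr'
    filter_upwards [hev] with h hh
    have hh0 : (0:ℝ) < h := hh.1
    have hV1 := hV1p h hh
    rw [Pi.div_apply]
    field_simp
    ring
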